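/- If M is a block diagonally dominant Hermitian block matrix written as D - A with D block-diagonal and A having zero diagonal blocks, then D + A is also block diagonally dominant (and hence positive semidefinite). -/

import Mathlib

open Matrix Finset
open scoped ComplexOrder

set_option synthInstance.maxHeartbeats 1000000
set_option maxHeartbeats 1000000

/-- The `ℓ²` operator norm of a square complex matrix. -/
noncomputable def matOpNorm {r : ℕ} (A : Matrix (Fin r) (Fin r) ℂ) : ℝ :=
  ‖(Matrix.toEuclideanCLM (𝕜 := ℂ) A : EuclideanSpace ℂ (Fin r) →L[ℂ] EuclideanSpace ℂ (Fin r))‖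

/-- A Hermitian block matrix (given by its `r × r` blocks) is block diagonally dominant
if for every `i`, `M i i ⪰ (∑_{j ≠ i} ‖M i j‖) · I`. -/
def IsBDD {n r : ℕ} (M : Fin n → Fin n → Matrix (Fin r) (Fin r) ℂ) : Prop :=
  ∀ i, (M i i - (∑ j ∈ Finset.univ.erase i, matOpNorm (M i j)) •
      (1 : Matrix (Fin r) (Fin r) ℂ)).PosSemidef

/-- Flatten a block matrix into an ordinary matrix. -/
def flatten {n r : ℕ} (M : Fin n → Fin n → Matrix (Fin r) (Fin r) ℂ) :
    Matrix (Fin n × Fin r) (Fin n × Fin r) ℂ :=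
  Matrix.of fun p q => M p.1 q.1 p.2 q.2

lemma matOpNorm_neg {r : ℕ} (A : Matrix (Fin r) (Fin r) ℂ) : matOpNorm (-A) = matOpNorm A := by
  simp [matOpNorm, map_neg]

lemma matOpNorm_nonneg {r : ℕ} (A : Matrix (Fin r) (Fin r) ℂ) : 0 ≤ matOpNorm A :=
  norm_nonneg _

lemma matOpNorm_conjTranspose {r : ℕ} (A : Matrix (Fin r) (Fin r) ℂ) :
    matOpNorm Aᴴ = matOpNorm A := by
  rw [matOpNorm, show Aᴴ = star A from rfl, map_star,
    ContinuousLinearMap.star_eq_adjoint]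
  rw [show matOpNorm A = ‖Matrix.toEuclideanCLM (𝕜 := ℂ) A‖ from rfl]
  exact LinearIsometryEquiv.norm_map _ _

lemma dot_eq_inner {r : ℕ} (A : Matrix (Fin r) (Fin r) ℂ) (v w : Fin r → ℂ) :
    star v ⬝ᵥ A *ᵥ w = inner (𝕜 := ℂ) ((WithLp.equiv 2 (Fin r → ℂ)).symm v)
      (Matrix.toEuclideanCLM (𝕜 := ℂ) A ((WithLp.equiv 2 (Fin r → ℂ)).symm w)) := by
  rw [dotProduct_comm]; rfl

lemma norm_dot_le {r : ℕ} (A : Matrix (Fin r) (Fin r) ℂ) (v w : Fin r → ℂ) :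
    ‖star v ⬝ᵥ A *ᵥ w‖ ≤ matOpNorm A * ‖(WithLp.equiv 2 (Fin r → ℂ)).symm v‖ *
      ‖(WithLp.equiv 2 (Fin r → ℂ)).symm w‖ := by
  rw [dot_eq_inner]
  refine (norm_inner_le_norm _ _).trans ?_
  have h := (Matrix.toEuclideanCLM (𝕜 := ℂ) A).le_opNorm ((WithLp.equiv 2 (Fin r → ℂ)).symm w)
  calc ‖(WithLp.equiv 2 (Fin r → ℂ)).symm v‖ *
        ‖Matrix.toEuclideanCLM (𝕜 := ℂ) A ((WithLp.equiv 2 (Fin r → ℂ)).symm w)‖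
      ≤ ‖(WithLp.equiv 2 (Fin r → ℂ)).symm v‖ *
        (matOpNorm A * ‖(WithLp.equiv 2 (Fin r → ℂ)).symm w‖) :=
        mul_le_mul_of_nonneg_left h (norm_nonneg _)
    _ = matOpNorm A * ‖(WithLp.equiv 2 (Fin r → ℂ)).symm v‖ *
        ‖(WithLp.equiv 2 (Fin r → ℂ)).symm w‖ := by ring

lemma sum_pair_le {n : ℕ} (m : Fin n → Fin n → ℝ) (a : Fin n → ℝ)
    (hm : ∀ i j, 0 ≤ m i j) (hsymm : ∀ i j, m i j = m j i) :
    ∑ i, ∑ j ∈ univ.erase i, m i j * (a i * a j) ≤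
      ∑ i, ∑ j ∈ univ.erase i, m i j * a i ^ 2 := by
  have hswap : ∀ f : Fin n → Fin n → ℝ,
      ∑ i, ∑ j ∈ univ.erase i, f i j = ∑ i, ∑ j ∈ univ.erase i, f j i := by
    intro f
    rw [Finset.sum_comm' (s := univ) (t := fun x => univ.erase x)
      (s' := fun y => univ.erase y) (t' := univ)
      (fun x y => by simp [Finset.mem_erase, ne_comm])]
  calc ∑ i, ∑ j ∈ univ.erase i, m i j * (a i * a j)
      ≤ ∑ i, ∑ j ∈ univ.erase i, (m i j * a i ^ 2 / 2 + m i j * a j ^ 2 / 2) := by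
        refine Finset.sum_le_sum fun i _ => Finset.sum_le_sum fun j _ => ?_
        nlinarith [mul_nonneg (hm i j) (sq_nonneg (a i - a j))]
    _ = (∑ i, ∑ j ∈ univ.erase i, m i j * a i ^ 2 / 2)
        + ∑ i, ∑ j ∈ univ.erase i, m i j * a j ^ 2 / 2 := by
        simp [Finset.sum_add_distrib]
    _ = ∑ i, ∑ j ∈ univ.erase i, m i j * a i ^ 2 := by
        rw [hswap (fun i j => m i j * a j ^ 2 / 2)]
        have : ∀ i : Fin n, ∀ j ∈ univ.erase i, m j i * a i ^ 2 / 2 = m i j * a i ^ 2 / 2 :=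
          fun i j _ => by rw [hsymm]
        rw [Finset.sum_congr rfl fun i _ => Finset.sum_congr rfl (this i),
          ← Finset.sum_add_distrib]
        refine Finset.sum_congr rfl fun i _ => ?_
        rw [← Finset.sum_add_distrib]
        exact Finset.sum_congr rfl fun j _ => by ring

/-- If `M = D - A` is a Hermitian bDD block matrix with `D` its block-diagonal part and `A`
its (negated) off-diagonal part, then `D + A` (i.e. the matrix obtained by flipping the sign
of all off-diagonal blocks) is also bDD, and hence positive semidefinite. -/
theorem stmt_7 {n r : ℕ} (M : Fin n → Fin n → Matrix (Fin r) (Fin r) ℂ)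
    (hHerm : ∀ i j, (M i j)ᴴ = M j i) (hbdd : IsBDD M) :
    IsBDD (fun i j => if i = j then M i i else - M i j) ∧
      (flatten (fun i j => if i = j then M i i else - M i j)).PosSemidef := by
  set N : Fin n → Fin n → Matrix (Fin r) (Fin r) ℂ :=
    fun i j => if i = j then M i i else - M i j with hN
  -- basic facts about N
  have hNdiag : ∀ i, N i i = M i i := fun i => if_pos rfl
  have hNoff : ∀ i j, i ≠ j → N i j = - M i j := fun i j h => if_neg h
  have hNnorm : ∀ i j, matOpNorm (N i j) = matOpNorm (M i j) := by
    intro i j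
    by_cases h : i = j
    · subst h; rw [hNdiag]
    · rw [hNoff i j h, matOpNorm_neg]
  have hMnormsymm : ∀ i j, matOpNorm (M i j) = matOpNorm (M j i) := by
    intro i j
    rw [← hHerm i j, matOpNorm_conjTranspose]
  have hNH : ∀ i j, (N i j)ᴴ = N j i := by
    intro i j
    by_cases h : i = j
    · subst h; rw [hNdiag]; exact hHerm i i
    · rw [hNoff i j h, hNoff j i (Ne.symm h), conjTranspose_neg, hHerm]
  -- bDD of N
  have hbddN : IsBDD N := by
    intro i
    have hsum : ∑ j ∈ Finset.univ.erase i, matOpNorm (N i j)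
        = ∑ j ∈ Finset.univ.erase i, matOpNorm (M i j) :=
      Finset.sum_congr rfl fun j _ => hNnorm i j
    rw [hNdiag, hsum]
    exact hbdd i
  refine ⟨hbddN, Matrix.PosSemidef.of_dotProduct_mulVec_nonneg ?_ ?_⟩
  · -- Hermitian
    ext p q
    have := congrFun (congrFun (hNH q.1 p.1) p.2) q.2
    rw [conjTranspose_apply] at this
    simpa [flatten, conjTranspose_apply] using this
  · -- quadratic form nonneg
    intro x
    set v : Fin n → Fin r → ℂ := fun i k => x (i, k) with hv
    set u : Fin n → EuclideanSpace ℂ (Fin r) :=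
      fun i => (WithLp.equiv 2 (Fin r → ℂ)).symm (v i) with hu
    set T : Fin n → Fin n → ℂ := fun i j => star (v i) ⬝ᵥ (N i j) *ᵥ (v j) with hT
    set a : Fin n → ℝ := fun i => ‖u i‖ with ha
    set m : Fin n → Fin n → ℝ := fun i j => matOpNorm (M i j) with hm
    set c : Fin n → ℝ := fun i => ∑ j ∈ Finset.univ.erase i, m i j with hc
    -- expansion of the quadratic form
    have hS : star x ⬝ᵥ (flatten N) *ᵥ x = ∑ i, ∑ j, T i j := by
      simp only [hT, dotProduct, mulVec, flatten, Matrix.of_apply, Fintype.sum_prod_type,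
        Finset.mul_sum, Pi.star_apply, hv]
      exact Finset.sum_congr rfl fun i _ => Finset.sum_comm
    -- the value is self-conjugate
    have hstar : star (star x ⬝ᵥ (flatten N) *ᵥ x) = star x ⬝ᵥ (flatten N) *ᵥ x := by
      have hH : (flatten N)ᴴ = flatten N := by
        ext p q
        have := congrFun (congrFun (hNH q.1 p.1) p.2) q.2
        rw [conjTranspose_apply] at this
        simpa [flatten, conjTranspose_apply] using this
      calc star (star x ⬝ᵥ (flatten N) *ᵥ x)
          = star ((flatten N) *ᵥ x) ⬝ᵥ x := (star_dotProduct _ _).symm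
        _ = (star x ᵥ* (flatten N)ᴴ) ⬝ᵥ x := by rw [star_mulVec]
        _ = star x ⬝ᵥ (flatten N)ᴴ *ᵥ x := by rw [dotProduct_mulVec]
        _ = star x ⬝ᵥ (flatten N) *ᵥ x := by rw [hH]
    -- norm of each inner dot product
    have hdotv : ∀ i, star (v i) ⬝ᵥ (v i) = ((a i : ℂ)) ^ 2 := by
      intro i
      rw [show star (v i) ⬝ᵥ v i = inner (𝕜 := ℂ) (u i) (u i) from by
        rw [dotProduct_comm]; rfl]
      exact inner_self_eq_norm_sq_to_K (𝕜 := ℂ) (u i)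
    -- diagonal lower bound
    have hdiag : ∀ i, c i * a i ^ 2 ≤ (T i i).re := by
      intro i
      have h0 := (hbdd i).dotProduct_mulVec_nonneg (v i)
      have hEq : star (v i) ⬝ᵥ ((M i i -
          (∑ j ∈ Finset.univ.erase i, matOpNorm (M i j)) • (1 : Matrix (Fin r) (Fin r) ℂ))
          *ᵥ (v i)) = T i i - ((c i * a i ^ 2 : ℝ) : ℂ) := by
        rw [sub_mulVec, dotProduct_sub, smul_mulVec, one_mulVec, dotProduct_smul,
          hdotv i, hT]
        simp only [hNdiag, hc, hm]
        rw [Complex.real_smul]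
        push_cast
        ring
      rw [hEq] at h0
      have h1 := (RCLike.nonneg_iff.mp h0).1
      simp only [RCLike.re_to_complex, Complex.sub_re, Complex.ofReal_re] at h1
      linarith
    -- off-diagonal lower bound
    have hoff : ∀ i j, i ≠ j → -(m i j * (a i * a j)) ≤ (T i j).re := by
      intro i j hij
      have hb : ‖T i j‖ ≤ m i j * (a i * a j) := by
        have := norm_dot_le (N i j) (v i) (v j)
        rw [hNnorm i j] at this
        calc ‖T i j‖ ≤ matOpNorm (M i j) * ‖u i‖ * ‖u j‖ := this
          _ = m i j * (a i * a j) := by rw [hm, ha]; ring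
      have h1 : -(m i j * (a i * a j)) ≤ -‖T i j‖ := neg_le_neg hb
      have h2 : -‖T i j‖ ≤ (T i j).re := by
        have := Complex.abs_re_le_norm (T i j)
        cases abs_le.mp this with
        | intro hl hr => linarith
      linarith
    -- put things together
    have hre : 0 ≤ (star x ⬝ᵥ (flatten N) *ᵥ x).re := by
      rw [hS, Complex.re_sum]
      have hsplit : ∀ i : Fin n, (∑ j, T i j).re
          = (T i i).re + ∑ j ∈ univ.erase i, (T i j).re := by
        intro i
        rw [Complex.re_sum, ← Finset.add_sum_erase _ _ (Finset.mem_univ i)]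
      rw [Finset.sum_congr rfl fun i _ => hsplit i]
      have key : ∑ i, ∑ j ∈ univ.erase i, m i j * (a i * a j) ≤
          ∑ i, ∑ j ∈ univ.erase i, m i j * a i ^ 2 :=
        sum_pair_le m a (fun i j => matOpNorm_nonneg _) (fun i j => hMnormsymm i j)
      have hlower : ∑ i, (c i * a i ^ 2 - ∑ j ∈ univ.erase i, m i j * (a i * a j))
          ≤ ∑ i, ((T i i).re + ∑ j ∈ univ.erase i, (T i j).re) := by
        refine Finset.sum_le_sum fun i _ => ?_
        have h1 := hdiag i
        have h2 : -(∑ j ∈ univ.erase i, m i j * (a i * a j))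
            ≤ ∑ j ∈ univ.erase i, (T i j).re := by
          rw [← Finset.sum_neg_distrib]
          refine Finset.sum_le_sum fun j hj => hoff i j (Finset.ne_of_mem_erase hj).symm
        linarith
      have hzero : 0 ≤ ∑ i, (c i * a i ^ 2 - ∑ j ∈ univ.erase i, m i j * (a i * a j)) := by
        rw [Finset.sum_sub_distrib]
        have hci : ∀ i : Fin n, c i * a i ^ 2 = ∑ j ∈ univ.erase i, m i j * a i ^ 2 := by
          intro i; rw [hc, Finset.sum_mul]
        rw [Finset.sum_congr rfl fun i _ => hci i]
        linarith [key]
      linarith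
    have him : (star x ⬝ᵥ (flatten N) *ᵥ x).im = 0 := by
      have := hstar
      rw [Complex.star_def, Complex.conj_eq_iff_im] at this
      exact this
    exact RCLike.nonneg_iff.mpr ⟨by simpa using hre, by simpa using him⟩
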